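/- In a structured relational model, the combined relation does not constrain root nodes jointly beyond their local relations: if M = (V, E, 𝒮) is a structured model and R ⊆ V is the set of roots (nodes with no parents), then (⊗𝒮) ↓ R = ⊗{s_v | v ∈ R}, provided the dag is such that every node's local relation extends every parent assignment (the structured-model condition s_v ↓ pa(v) = e_{pa(v)}). -/

import Mathlib

/-- A relational structure over variables of type `ι`: a domain of variables and a
set of (total representatives of) assignments, cylindrical over the domain. -/
structure RelStr (ι : Type*) where
  dom : Set ι
  A : Set (ι → Bool)
  cyl : ∀ u v : ι → Bool, (∀ x ∈ dom, u x = v x) → u ∈ A → v ∈ A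

namespace RelStr
variable {ι : Type*}

/-- Combination (join) of relational structures. -/
def comb (s t : RelStr ι) : RelStr ι where
  dom := s.dom ∪ t.dom
  A := s.A ∩ t.A
  cyl := fun u v h hu =>
    ⟨s.cyl u v (fun x hx => h x (Or.inl hx)) hu.1,
     t.cyl u v (fun x hx => h x (Or.inr hx)) hu.2⟩

/-- Marginalization (projection) of a relational structure onto a set of variables. -/
def marg (s : RelStr ι) (X : Set ι) : RelStr ι where
  dom := s.dom ∩ X
  A := {u | ∃ a ∈ s.A, ∀ x ∈ s.dom ∩ X, u x = a x}
  cyl := fun u v h hu => by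
    obtain ⟨a, ha, hag⟩ := hu
    exact ⟨a, ha, fun x hx => (h x hx).symm.trans (hag x hx)⟩

/-- The full relational structure `e_X` on variables `X`. -/
def full (X : Set ι) : RelStr ι where
  dom := X
  A := Set.univ
  cyl := fun _ _ _ _ => trivial

/-- Variable elimination. -/
def elim (s : RelStr ι) (x : ι) : RelStr ι := s.marg (s.dom \ {x})

/-- Combination of a finite family (list) of relational structures. -/
def bigComb (l : List (RelStr ι)) : RelStr ι := l.foldr comb (full ∅)

end RelStr

/-- A structured relational model: a finite dag `(V, E)` together with a local
relational structure `s v` for each node `v ∈ V`, whose domain is `v` together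
with its parents, and which does not constrain its parents. -/
structure StructModel (ι : Type*) where
  V : Finset ι
  E : ι → ι → Prop
  s : ι → RelStr ι
  acyclic : ∀ v, ¬ Relation.TransGen E v v
  edge_mem : ∀ u v, E u v → u ∈ V ∧ v ∈ V
  dom_eq : ∀ v ∈ V, (s v).dom = insert v {u | E u v}
  no_constrain : ∀ v ∈ V, (s v).marg {u | E u v} = RelStr.full {u | E u v}

/-- The combined relation `⊗𝒮` of a structured model. -/
noncomputable def StructModel.combined {ι : Type*} (M : StructModel ι) : RelStr ι :=
  RelStr.bigComb (M.V.toList.map M.s)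


namespace RelStr
variable {ι : Type*}

lemma ext' {s t : RelStr ι} (hd : s.dom = t.dom) (hA : s.A = t.A) : s = t := by
  cases s; cases t; simp_all

lemma mem_bigComb {l : List (RelStr ι)} {u : ι → Bool} :
    u ∈ (bigComb l).A ↔ ∀ s ∈ l, u ∈ s.A := by
  induction l with
  | nil => simp [bigComb, full]
  | cons s l ih =>
    constructor
    · rintro ⟨h1, h2⟩ t ht
      rcases List.mem_cons.1 ht with rfl | ht
      · exact h1
      · exact ih.1 h2 t ht
    · intro h
      exact ⟨h s (List.mem_cons_self), ih.2 fun t ht => h t (List.mem_cons_of_mem _ ht)⟩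

lemma mem_bigComb_dom {l : List (RelStr ι)} {x : ι} :
    x ∈ (bigComb l).dom ↔ ∃ s ∈ l, x ∈ s.dom := by
  induction l with
  | nil => simp [bigComb, full]
  | cons s l ih =>
    constructor
    · rintro (h | h)
      · exact ⟨s, List.mem_cons_self, h⟩
      · obtain ⟨t, ht, hx⟩ := ih.1 h
        exact ⟨t, List.mem_cons_of_mem _ ht, hx⟩
    · rintro ⟨t, ht, hx⟩
      rcases List.mem_cons.1 ht with rfl | ht
      · exact Or.inl hx
      · exact Or.inr (ih.2 ⟨t, ht, hx⟩)

end RelStr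

/-- Key extension lemma: if `a` satisfies all local relations outside a
descendant-closed set `S ⊆ V`, then it can be modified inside `S` only so as to
satisfy all local relations. -/
lemma StructModel.exists_extend {ι : Type*} (M : StructModel ι) :
    ∀ (n : ℕ) (S : Finset ι), S.card = n → (∀ v ∈ S, v ∈ M.V) →
    (∀ v ∈ S, ∀ w, M.E v w → w ∈ S) →
    ∀ a : ι → Bool, (∀ w ∈ M.V, w ∉ S → a ∈ (M.s w).A) →
    ∃ a', (∀ w ∈ M.V, a' ∈ (M.s w).A) ∧ ∀ x, x ∉ S → a' x = a x := by
  classical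
  intro n
  induction n using Nat.strong_induction_on with
  | _ n ih =>
  intro S hcard hSV hclosed a ha
  rcases S.eq_empty_or_nonempty with rfl | hne
  · exact ⟨a, fun w hw => ha w hw (by simp), fun x _ => rfl⟩
  -- pick a minimal element of S w.r.t. reachability
  haveI : IsTrans {x // x ∈ S} (fun a b => Relation.TransGen M.E a.1 b.1) :=
    ⟨fun _ _ _ h1 h2 => h1.trans h2⟩
  haveI : IsIrrefl {x // x ∈ S} (fun a b => Relation.TransGen M.E a.1 b.1) :=
    ⟨fun a h => M.acyclic _ h⟩
  obtain ⟨⟨v, hvS⟩, -, hmin⟩ :=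
    (Finite.wellFounded_of_trans_of_irrefl
      (fun a b : {x // x ∈ S} => Relation.TransGen M.E a.1 b.1)).has_min
      Set.univ ⟨⟨hne.choose, hne.choose_spec⟩, trivial⟩
  have hpar : ∀ u ∈ S, ¬ M.E u v := fun u hu he =>
    hmin ⟨u, hu⟩ trivial (Relation.TransGen.single he)
  have hvV : v ∈ M.V := hSV v hvS
  have hdom := M.dom_eq v hvV
  -- get b ∈ A (s v) agreeing with a on the parents of v
  have hmarg : a ∈ ((M.s v).marg {u | M.E u v}).A := by
    rw [M.no_constrain v hvV]; trivial
  obtain ⟨b, hb, hab⟩ := hmarg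
  set a' : ι → Bool := Function.update a v (b v) with ha'
  have hvv : ¬ M.E v v := fun h => M.acyclic v (Relation.TransGen.single h)
  have ha'v : a' ∈ (M.s v).A := by
    refine (M.s v).cyl b a' (fun x hx => ?_) hb
    rw [hdom] at hx
    rcases hx with rfl | hx
    · simp [ha']
    · have hxv : x ≠ v := fun h => hvv (h ▸ hx)
      have hax : a x = b x := hab x ⟨hdom ▸ Set.mem_insert_iff.2 (Or.inr hx), hx⟩
      rw [ha', Function.update_of_ne hxv, hax]
  have ha'w : ∀ w ∈ M.V, w ∉ S.erase v → a' ∈ (M.s w).A := by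
    intro w hwV hw
    rcases Classical.em (w = v) with rfl | hwv
    · exact ha'v
    · have hwS : w ∉ S := fun hwS => hw (Finset.mem_erase.2 ⟨hwv, hwS⟩)
      have hvd : v ∉ (M.s w).dom := by
        rw [M.dom_eq w hwV]
        rintro (rfl | hvw)
        · exact hwS hvS
        · exact hwS (hclosed v hvS w hvw)
      refine (M.s w).cyl a a' (fun x hx => ?_) (ha w hwV hwS)
      have hxv : x ≠ v := fun hh => hvd (hh ▸ hx)
      rw [ha', Function.update_of_ne hxv]
  have hcard' : (S.erase v).card < n := by
    rw [← hcard]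
    exact Finset.card_erase_lt_of_mem hvS
  obtain ⟨a'', h1, h2⟩ := ih _ hcard' (S.erase v) rfl
    (fun u hu => hSV u (Finset.mem_of_mem_erase hu))
    (fun u hu w hw => by
      refine Finset.mem_erase.2 ⟨fun hh => ?_, hclosed u (Finset.mem_of_mem_erase hu) w hw⟩
      exact hpar u (Finset.mem_of_mem_erase hu) (hh ▸ hw))
    a' ha'w
  refine ⟨a'', h1, fun x hx => ?_⟩
  have hxv : x ≠ v := fun hh => hx (hh ▸ hvS)
  rw [h2 x (fun hh => hx (Finset.mem_of_mem_erase hh)), ha', Function.update_of_ne hxv]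

open RelStr in
/-- Projecting the combined relation of a structured model onto the set `R` of
root nodes gives exactly the combination of the local relations of the roots. -/
theorem structModel_roots_marg {ι : Type*} (M : StructModel ι) (R : Finset ι)
    (hR : ∀ v, v ∈ R ↔ v ∈ M.V ∧ ∀ u, ¬ M.E u v) :
    marg M.combined (↑R : Set ι) = bigComb (R.toList.map M.s) := by
  classical
  have hRV : ∀ v ∈ R, v ∈ M.V := fun v hv => ((hR v).1 hv).1
  have hroot_dom : ∀ v ∈ R, (M.s v).dom = {v} := by
    intro v hv
    rw [M.dom_eq v (hRV v hv)]
    have h0 : {u | M.E u v} = (∅ : Set ι) :=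
      Set.eq_empty_iff_forall_notMem.2 fun u hu => ((hR v).1 hv).2 u hu
    rw [h0]
    simp
  have hcomb_mem : ∀ u : ι → Bool, u ∈ M.combined.A ↔ ∀ v ∈ M.V, u ∈ (M.s v).A := by
    intro u
    rw [StructModel.combined, mem_bigComb]
    constructor
    · intro h v hv
      exact h _ (List.mem_map.2 ⟨v, Finset.mem_toList.2 hv, rfl⟩)
    · rintro h t ht
      obtain ⟨v, hv, rfl⟩ := List.mem_map.1 ht
      exact h v (Finset.mem_toList.1 hv)
  have hcomb_dom : M.combined.dom = ↑M.V := by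
    ext x
    rw [StructModel.combined]
    rw [show ((bigComb (M.V.toList.map M.s)).dom) = (bigComb (M.V.toList.map M.s)).dom from rfl]
    constructor
    · intro hmem
      obtain ⟨t, ht, hx⟩ := mem_bigComb_dom.1 hmem
      obtain ⟨v, hv, rfl⟩ := List.mem_map.1 ht
      have hvV := Finset.mem_toList.1 hv
      rw [M.dom_eq v hvV] at hx
      rcases hx with rfl | hx
      · exact hvV
      · exact (M.edge_mem x v hx).1
    · intro hx
      refine mem_bigComb_dom.2 ⟨M.s x, List.mem_map.2 ⟨x, Finset.mem_toList.2 hx, rfl⟩, ?_⟩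
      rw [M.dom_eq x hx]
      exact Set.mem_insert _ _
  have hrhs_mem : ∀ u : ι → Bool, u ∈ (bigComb (R.toList.map M.s)).A ↔
      ∀ v ∈ R, u ∈ (M.s v).A := by
    intro u
    rw [mem_bigComb]
    constructor
    · intro h v hv
      exact h _ (List.mem_map.2 ⟨v, Finset.mem_toList.2 hv, rfl⟩)
    · rintro h t ht
      obtain ⟨v, hv, rfl⟩ := List.mem_map.1 ht
      exact h v (Finset.mem_toList.1 hv)
  have hinter : M.combined.dom ∩ (↑R : Set ι) = (↑R : Set ι) := by
    rw [hcomb_dom]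
    exact Set.inter_eq_right.2 fun x hx => hRV x hx
  refine ext' ?_ ?_
  · show M.combined.dom ∩ (↑R : Set ι) = _
    rw [hinter]
    ext x
    constructor
    · intro hx
      exact mem_bigComb_dom.2 ⟨M.s x, List.mem_map.2 ⟨x, Finset.mem_toList.2 hx, rfl⟩,
        by rw [hroot_dom x hx]; rfl⟩
    · intro hmem
      obtain ⟨t, ht, hxt⟩ := mem_bigComb_dom.1 hmem
      obtain ⟨v, hv, rfl⟩ := List.mem_map.1 ht
      have hvR := Finset.mem_toList.1 hv
      rw [hroot_dom v hvR] at hxt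
      exact hxt ▸ hvR
  · ext u
    show (∃ a ∈ M.combined.A, ∀ x ∈ M.combined.dom ∩ (↑R : Set ι), u x = a x) ↔ _
    rw [hinter, hrhs_mem]
    constructor
    · rintro ⟨a, ha, hag⟩ v hv
      refine (M.s v).cyl a u (fun x hx => ?_) ((hcomb_mem a).1 ha v (hRV v hv))
      rw [hroot_dom v hv] at hx
      exact (hag x (hx ▸ hv)).symm
    · intro h
      -- extend u to an assignment satisfying all local relations
      obtain ⟨a', h1, h2⟩ := M.exists_extend (M.V \ R).card (M.V \ R) rfl
        (fun v hv => (Finset.mem_sdiff.1 hv).1)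
        (fun v hv w hw => by
          refine Finset.mem_sdiff.2 ⟨(M.edge_mem v w hw).2, fun hwR => ?_⟩
          exact ((hR w).1 hwR).2 v hw)
        u
        (fun w hwV hw => by
          have hwR : w ∈ R := by
            by_contra hwR
            exact hw (Finset.mem_sdiff.2 ⟨hwV, hwR⟩)
          exact h w hwR)
      refine ⟨a', (hcomb_mem a').2 h1, fun x hx => ?_⟩
      exact (h2 x (fun hh => (Finset.mem_sdiff.1 hh).2 hx)).symm
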